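/- arXiv:1311.6450 — 2 statements merged into one kernel-verified Lean document; each statement's English description precedes it below -/
import Mathlib

section
/- Closed convex cone duality characterization: for a concave, differentiable, positively 1-homogeneous function F on an open convex cone Γ ⊆ 𝕊^d with closure Γ̄, the closure satisfies Γ̄ = {γ ∈ 𝕊^d : ∇F(α)·γ ≥ 0 for all α ∈ Γ}, provided F > 0 on Γ and F = 0 on ∂Γ. -/
open Matrix Set Filter Topology

/-- If the derivative of `h` at `0` exists and slopes from `0` to the right are
eventually bounded above by `c`, then the derivative is at most `c`. -/
lemma aux_deriv_le_of_slope (h : ℝ → ℝ) (dv c : ℝ) (hd : HasDerivAt h dv 0)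
    (hs : ∀ᶠ u in 𝓝[>] (0:ℝ), (h u - h 0) / u ≤ c) : dv ≤ c := by
  have h1 : HasDerivWithinAt h dv (Ioi (0:ℝ)) 0 := hd.hasDerivWithinAt
  rw [hasDerivWithinAt_iff_tendsto_slope' (by simp)] at h1
  refine le_of_tendsto h1 (hs.mono ?_)
  intro u hu
  simpa [slope_def_field, div_eq_inv_mul] using hu

lemma aux_le_deriv_of_slope (h : ℝ → ℝ) (dv c : ℝ) (hd : HasDerivAt h dv 0)
    (hs : ∀ᶠ u in 𝓝[>] (0:ℝ), c ≤ (h u - h 0) / u) : c ≤ dv := by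
  have h1 : HasDerivWithinAt h dv (Ioi (0:ℝ)) 0 := hd.hasDerivWithinAt
  rw [hasDerivWithinAt_iff_tendsto_slope' (by simp)] at h1
  refine ge_of_tendsto h1 (hs.mono ?_)
  intro u hu
  simpa [slope_def_field, div_eq_inv_mul] using hu

theorem stmt_14 (d : ℕ) (Γ : Set (Matrix (Fin d) (Fin d) ℝ))
    (hne : Γ.Nonempty) (hsym : ∀ M ∈ Γ, M.IsSymm)
    (hopen : IsOpen {M : {A : Matrix (Fin d) (Fin d) ℝ // A.IsSymm} |
      (M : Matrix (Fin d) (Fin d) ℝ) ∈ Γ})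
    (hconv : Convex ℝ Γ) (hcone : ∀ t : ℝ, 0 < t → ∀ M ∈ Γ, t • M ∈ Γ)
    (F : Matrix (Fin d) (Fin d) ℝ → ℝ)
    (hcont : ContinuousOn F (closure Γ))
    (hconc : ConcaveOn ℝ (closure Γ) F)
    (hhom : ∀ t : ℝ, 0 < t → ∀ M ∈ closure Γ, F (t • M) = t * F M)
    (DF : Matrix (Fin d) (Fin d) ℝ → Matrix (Fin d) (Fin d) ℝ → ℝ)
    (hDF : ∀ α ∈ Γ, ∀ γ : Matrix (Fin d) (Fin d) ℝ,
      HasDerivAt (fun t : ℝ => F (α + t • γ)) (DF α γ) 0)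
    (hbd : ∀ M ∈ closure Γ \ Γ, F M = 0)
    (hpos : ∀ M ∈ Γ, 0 < F M) :
    closure Γ = {γ : Matrix (Fin d) (Fin d) ℝ | γ.IsSymm ∧ ∀ α ∈ Γ, 0 ≤ DF α γ} := by
  have hclconv : Convex ℝ (closure Γ) := hconv.closure
  -- closure Γ is stable under positive scaling
  have hsmul_cl : ∀ t : ℝ, 0 < t → ∀ M ∈ closure Γ, t • M ∈ closure Γ := by
    intro t ht M hM
    have hcont' : Continuous fun N : Matrix (Fin d) (Fin d) ℝ => t • N :=
      continuous_id.const_smul t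
    have := (image_closure_subset_closure_image hcont') (mem_image_of_mem _ hM)
    refine closure_mono ?_ this
    rintro _ ⟨N, hN, rfl⟩
    exact hcone t ht N hN
  -- closure Γ is stable under addition
  have hadd_cl : ∀ x ∈ closure Γ, ∀ y ∈ closure Γ, x + y ∈ closure Γ := by
    intro x hx y hy
    have hmid : (1/2 : ℝ) • x + (1/2 : ℝ) • y ∈ closure Γ :=
      hclconv hx hy (by norm_num) (by norm_num) (by norm_num)
    have := hsmul_cl 2 (by norm_num) _ hmid
    have heq : (2:ℝ) • ((1/2 : ℝ) • x + (1/2 : ℝ) • y) = x + y := by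
      module
    rwa [heq] at this
  -- F is nonnegative on the closure
  have hFnonneg : ∀ M ∈ closure Γ, 0 ≤ F M := by
    intro M hM
    by_cases hMΓ : M ∈ Γ
    · exact (hpos M hMΓ).le
    · exact le_of_eq (hbd M ⟨hM, hMΓ⟩).symm
  -- superadditivity
  have hsuper : ∀ x ∈ closure Γ, ∀ y ∈ closure Γ, F x + F y ≤ F (x + y) := by
    intro x hx y hy
    have hmid : (1/2 : ℝ) • x + (1/2 : ℝ) • y ∈ closure Γ :=
      hclconv hx hy (by norm_num) (by norm_num) (by norm_num)
    have h1 : (1/2 : ℝ) * F x + (1/2 : ℝ) * F y ≤ F ((1/2 : ℝ) • x + (1/2 : ℝ) • y) := by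
      simpa using hconc.2 hx hy (by norm_num : (0:ℝ) ≤ 1/2) (by norm_num : (0:ℝ) ≤ 1/2)
        (by norm_num)
    have h2 := hhom 2 (by norm_num) _ hmid
    have heq : (2:ℝ) • ((1/2 : ℝ) • x + (1/2 : ℝ) • y) = x + y := by module
    rw [heq] at h2
    linarith
  -- all elements of the closure are symmetric matrices
  have hclsymm : ∀ M ∈ closure Γ, M.IsSymm := by
    intro M hM
    have hclosed : IsClosed {M : Matrix (Fin d) (Fin d) ℝ | M.IsSymm} := by
      have : {M : Matrix (Fin d) (Fin d) ℝ | M.IsSymm}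
          = {M : Matrix (Fin d) (Fin d) ℝ | Mᵀ = M} := by
        ext N; rfl
      rw [this]
      exact isClosed_eq (continuous_id.matrix_transpose) continuous_id
    exact closure_minimal hsym hclosed hM
  ext γ
  constructor
  · -- forward inclusion
    intro hγ
    refine ⟨hclsymm γ hγ, ?_⟩
    intro α hα
    have hαcl : α ∈ closure Γ := subset_closure hα
    refine aux_le_deriv_of_slope _ _ _ (hDF α hα γ) ?_
    filter_upwards [self_mem_nhdsWithin] with u hu
    have hu0 : (0:ℝ) < u := hu
    have huγ : u • γ ∈ closure Γ := hsmul_cl u hu0 γ hγ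
    have h1 : F α + F (u • γ) ≤ F (α + u • γ) := hsuper α hαcl _ huγ
    have h2 : F (u • γ) = u * F γ := hhom u hu0 γ hγ
    have h3 : 0 ≤ F γ := hFnonneg γ hγ
    have h4 : F α ≤ F (α + u • γ) := by nlinarith
    have h5 : F (α + (0:ℝ) • γ) = F α := by simp
    rw [h5]
    have : 0 ≤ F (α + u • γ) - F α := by linarith
    positivity
  · -- reverse inclusion
    rintro ⟨hγsym, hge⟩
    by_contra hnot
    obtain ⟨α, hα⟩ := hne
    -- the set of parameters where the ray stays in Γ
    set U : Set ℝ := {t : ℝ | α + t • γ ∈ Γ} with hU_def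
    have hUopen : IsOpen U := by
      have hmapcont : Continuous fun t : ℝ =>
          (⟨α + t • γ, by
            have h1 := hsym α hα
            unfold Matrix.IsSymm at *
            rw [transpose_add, transpose_smul, h1, hγsym]⟩ :
            {A : Matrix (Fin d) (Fin d) ℝ // A.IsSymm}) := by
        refine Continuous.subtype_mk ?_ _
        exact continuous_const.add (continuous_id.smul continuous_const)
      exact hopen.preimage hmapcont
    have h0U : (0:ℝ) ∈ U := by
      show α + (0:ℝ) • γ ∈ Γ
      simpa using hα
    -- the "bad" set S
    set S : Set ℝ := Ici (0:ℝ) ∩ Uᶜ with hS_def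
    have hSclosed : IsClosed S := isClosed_Ici.inter hUopen.isClosed_compl
    have hSne : S.Nonempty := by
      by_contra hSe
      rw [Set.not_nonempty_iff_eq_empty] at hSe
      -- then α + t•γ ∈ Γ for all t ≥ 0, hence γ ∈ closure Γ
      have hall : ∀ t : ℝ, 0 ≤ t → α + t • γ ∈ Γ := by
        intro t ht
        by_contra htU
        have : t ∈ S := ⟨ht, htU⟩
        rw [hSe] at this
        exact this
      apply hnot
      have hseq : ∀ n : ℕ, ((n:ℝ)+1)⁻¹ • α + γ ∈ Γ := by
        intro n
        have hn1 : (0:ℝ) < (n:ℝ)+1 := by positivity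
        have h1 : α + ((n:ℝ)+1) • γ ∈ Γ := hall _ (by positivity)
        have h2 := hcone ((n:ℝ)+1)⁻¹ (by positivity) _ h1
        have heq : ((n:ℝ)+1)⁻¹ • (α + ((n:ℝ)+1) • γ) = ((n:ℝ)+1)⁻¹ • α + γ := by
          rw [smul_add, smul_smul, inv_mul_cancel₀ hn1.ne', one_smul]
        rwa [heq] at h2
      have htend : Tendsto (fun n : ℕ => ((n:ℝ)+1)⁻¹ • α + γ) atTop (𝓝 γ) := by
        have h0 : Tendsto (fun n : ℕ => ((n:ℝ)+1)⁻¹) atTop (𝓝 (0:ℝ)) :=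
          tendsto_one_div_add_atTop_nhds_zero_nat.congr (by intro n; rw [one_div])
        have h1 : Tendsto (fun n : ℕ => ((n:ℝ)+1)⁻¹ • α) atTop
            (𝓝 ((0:ℝ) • α)) := h0.smul_const α
        rw [zero_smul] at h1
        simpa using h1.add_const γ
      exact mem_closure_of_tendsto htend (Filter.Eventually.of_forall hseq)
    have hSbdd : BddBelow S := ⟨0, fun x hx => hx.1⟩
    set T : ℝ := sInf S with hT_def
    have hTS : T ∈ S := hSclosed.csInf_mem hSne hSbdd
    have hT0 : 0 ≤ T := hTS.1
    have hTnotU : T ∉ U := hTS.2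
    have hTpos : 0 < T := by
      rcases hT0.lt_or_eq with h | h
      · exact h
      · exact absurd (h ▸ h0U) hTnotU
    have hIco : ∀ s : ℝ, 0 ≤ s → s < T → α + s • γ ∈ Γ := by
      intro s hs0 hsT
      by_contra hsU
      exact absurd (csInf_le hSbdd ⟨hs0, hsU⟩) (not_le.mpr hsT)
    -- points of the segment are in the closure
    have hpathcont : Continuous fun s : ℝ => α + s • γ :=
      continuous_const.add (continuous_id.smul continuous_const)
    have hβcl : α + T • γ ∈ closure Γ := by
      have hTcl : T ∈ closure (Ico (0:ℝ) T) := by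
        rw [closure_Ico hTpos.ne]
        exact ⟨hT0, le_refl T⟩
      refine map_mem_closure (f := fun s : ℝ => α + s • γ) hpathcont hTcl ?_
      intro s hs
      exact hIco s hs.1 hs.2
    have hβF : F (α + T • γ) = 0 := hbd _ ⟨hβcl, hTnotU⟩
    have hseg : ∀ r : ℝ, 0 ≤ r → r ≤ T → α + r • γ ∈ closure Γ := by
      intro r hr0 hrT
      rcases hrT.lt_or_eq with h | h
      · exact subset_closure (hIco r hr0 h)
      · rw [h]; exact hβcl
    -- Main monotonicity claim: F (α) ≤ F (α + s • γ) for s ∈ (0, T)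
    have hmono : ∀ s : ℝ, 0 < s → s < T → F α ≤ F (α + s • γ) := by
      intro s hs0 hsT
      set αs : Matrix (Fin d) (Fin d) ℝ := α + s • γ with hαs_def
      have hαsΓ : αs ∈ Γ := hIco s hs0.le hsT
      have hder := hDF αs hαsΓ γ
      have hDFge : 0 ≤ DF αs γ := hge αs hαsΓ
      set h : ℝ → ℝ := fun u => F (αs + u • γ) with hh_def
      -- h is concave on Icc (-s) (T - s)
      have hmem : ∀ u : ℝ, u ∈ Icc (-s) (T - s) → αs + u • γ ∈ closure Γ := by
        intro u hu
        have heq : αs + u • γ = α + (s + u) • γ := by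
          rw [hαs_def, add_assoc, ← add_smul]
        rw [heq]
        exact hseg (s + u) (by linarith [hu.1]) (by linarith [hu.2])
      have hconch : ConcaveOn ℝ (Icc (-s) (T - s)) h := by
        refine ⟨convex_Icc _ _, ?_⟩
        intro x hx y hy a b ha hb hab
        have hx' : αs + x • γ ∈ closure Γ := hmem x hx
        have hy' : αs + y • γ ∈ closure Γ := hmem y hy
        have key := hconc.2 hx' hy' ha hb hab
        have heq : a • (αs + x • γ) + b • (αs + y • γ) = αs + (a • x + b • y) • γ := by
          have ha1 : a = 1 - b := by linarith
          subst ha1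
          simp only [smul_eq_mul]
          module
        rw [heq] at key
        simpa using key
      -- slope bound: for u ∈ (0, T-s), slope ≤ (h 0 - h (-s)) / s
      have hslope : DF αs γ ≤ (h 0 - h (-s)) / s := by
        refine aux_deriv_le_of_slope h _ _ hder ?_
        have hmemI : Ioo (0:ℝ) (T - s) ∈ 𝓝[>] (0:ℝ) :=
          Ioo_mem_nhdsGT_of_mem ⟨le_refl 0, by linarith⟩
        filter_upwards [hmemI] with u hu
        have h1 := hconch.slope_anti_adjacent (x := -s) (y := 0) (z := u)
          ⟨le_refl _, by linarith⟩ ⟨by linarith [hu.1], hu.2.le⟩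
          (by linarith) hu.1
        have h2 : (h u - h 0) / (u - 0) ≤ (h 0 - h (-s)) / (0 - -s) := h1
        simpa using h2
      have hval0 : h 0 = F αs := by simp [hh_def]
      have hvalms : h (-s) = F α := by
        have heq : αs + (-s) • γ = α := by rw [hαs_def]; module
        show F (αs + (-s) • γ) = F α
        rw [heq]
      rw [hval0, hvalms] at hslope
      have h3 : 0 ≤ (F αs - F α) / s := le_trans hDFge hslope
      have h4 := mul_nonneg h3 hs0.le
      rw [div_mul_cancel₀ _ hs0.ne'] at h4
      linarith
    -- continuity gives F α ≤ F (α + T • γ) = 0, contradiction with F α > 0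
    have hgcont : ContinuousWithinAt (fun s : ℝ => F (α + s • γ)) (Icc 0 T) T := by
      have : ContinuousOn (fun s : ℝ => F (α + s • γ)) (Icc 0 T) := by
        refine hcont.comp hpathcont.continuousOn ?_
        intro r hr
        exact hseg r hr.1 hr.2
      exact this T ⟨hT0, le_refl T⟩
    have hnb : (𝓝[Ioo (0:ℝ) T] T).NeBot := by
      rw [← mem_closure_iff_nhdsWithin_neBot, closure_Ioo hTpos.ne]
      exact ⟨hT0, le_refl T⟩
    have htend : Tendsto (fun s : ℝ => F (α + s • γ)) (𝓝[Ioo (0:ℝ) T] T)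
        (𝓝 (F (α + T • γ))) :=
      hgcont.tendsto.mono_left (nhdsWithin_mono _ Ioo_subset_Icc_self)
    have hfin : F α ≤ F (α + T • γ) := by
      refine ge_of_tendsto htend ?_
      filter_upwards [self_mem_nhdsWithin] with s hs
      exact hmono s hs.1 hs.2
    rw [hβF] at hfin
    exact absurd (hpos α hα) (not_lt.mpr hfin)
end

section
/- For 0 < ε < 1, the function u(x₁,x₂) = |x₁|^{2−ε} on the unit disk in ℝ² is convex, satisfies det(D²u) = 0 almost everywhere, belongs to C^{1,1−ε} but not to C^{1,1} on the disk. -/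
open Real

-- subadditivity of rpow
lemma aux_rpow_subadd {a x y : ℝ} (ha0 : 0 ≤ a) (ha1 : a ≤ 1) (hx : 0 ≤ x) (hy : 0 ≤ y) :
    (x + y) ^ a ≤ x ^ a + y ^ a := by
  have h := NNReal.rpow_add_le_add_rpow x.toNNReal y.toNNReal ha0 ha1
  rw [← Real.toNNReal_add hx hy] at h
  have h' := NNReal.coe_le_coe.2 h
  simpa [NNReal.coe_rpow, Real.coe_toNNReal, hx, hy, add_nonneg hx hy] using h'

-- Hölder for nonneg
lemma aux_rpow_holder_nonneg {a s t : ℝ} (ha0 : 0 ≤ a) (ha1 : a ≤ 1) (hs : 0 ≤ s) (ht : 0 ≤ t) :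
    |s ^ a - t ^ a| ≤ |s - t| ^ a := by
  wlog h : t ≤ s generalizing s t
  · rw [abs_sub_comm, abs_sub_comm s t]; exact this ht hs (le_of_not_ge h)
  have h1 : t ^ a ≤ s ^ a := Real.rpow_le_rpow ht h ha0
  rw [abs_of_nonneg (by linarith), abs_of_nonneg (by linarith)]
  have := aux_rpow_subadd ha0 ha1 (sub_nonneg.2 h) ht
  calc s ^ a - t ^ a = (s - t + t) ^ a - t ^ a := by ring_nf
    _ ≤ (s - t) ^ a + t ^ a - t ^ a := by linarith
    _ = (s - t) ^ a := by ring

lemma aux_sign_abs_nonneg {a t : ℝ} (ha0 : 0 < a) (ht : 0 ≤ t) :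
    Real.sign t * |t| ^ a = t ^ a := by
  rcases eq_or_lt_of_le ht with h | h
  · simp [← h, Real.sign_zero, Real.zero_rpow ha0.ne']
  · rw [Real.sign_of_pos h, abs_of_pos h, one_mul]

-- signed power Hölder
lemma aux_sp_holder {a : ℝ} (ha0 : 0 < a) (ha1 : a ≤ 1) (s t : ℝ) :
    |Real.sign s * |s| ^ a - Real.sign t * |t| ^ a| ≤ 2 * |s - t| ^ a := by
  have key : ∀ s t : ℝ, 0 ≤ s → t ≤ 0 →
      |Real.sign s * |s| ^ a - Real.sign t * |t| ^ a| ≤ 2 * |s - t| ^ a := by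
    intro s t hs ht
    have h1 : Real.sign s * |s| ^ a = s ^ a := aux_sign_abs_nonneg ha0 hs
    have h2 : Real.sign t * |t| ^ a = -((-t) ^ a) := by
      have := aux_sign_abs_nonneg ha0 (neg_nonneg.2 ht)
      rw [Real.sign_neg, abs_neg] at this
      linarith [this]
    rw [h1, h2, sub_neg_eq_add]
    have hst : 0 ≤ s - t := by linarith
    have hsa : s ^ a ≤ (s - t) ^ a := Real.rpow_le_rpow hs (by linarith) ha0.le
    have hta : (-t) ^ a ≤ (s - t) ^ a := Real.rpow_le_rpow (by linarith) (by linarith) ha0.le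
    have hs0 : 0 ≤ s ^ a := Real.rpow_nonneg hs _
    have ht0 : 0 ≤ (-t) ^ a := Real.rpow_nonneg (by linarith) _
    rw [abs_of_nonneg (by linarith), abs_of_nonneg hst]
    linarith
  rcases le_total 0 s with hs | hs <;> rcases le_total 0 t with ht | ht
  · rw [aux_sign_abs_nonneg ha0 hs, aux_sign_abs_nonneg ha0 ht]
    have := aux_rpow_holder_nonneg ha0.le ha1 hs ht
    have h2 : (0:ℝ) ≤ |s - t| ^ a := Real.rpow_nonneg (abs_nonneg _) _
    linarith
  · exact key s t hs ht
  · rw [abs_sub_comm, abs_sub_comm s t]; exact key t s ht hs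
  · have h1 : Real.sign s * |s| ^ a = -((-s) ^ a) := by
      have := aux_sign_abs_nonneg ha0 (neg_nonneg.2 hs)
      rw [Real.sign_neg, abs_neg] at this; linarith
    have h2 : Real.sign t * |t| ^ a = -((-t) ^ a) := by
      have := aux_sign_abs_nonneg ha0 (neg_nonneg.2 ht)
      rw [Real.sign_neg, abs_neg] at this; linarith
    rw [h1, h2]
    have := aux_rpow_holder_nonneg ha0.le ha1 (neg_nonneg.2 ht) (neg_nonneg.2 hs)
    have e1 : |-(( -s) ^ a) - -((-t) ^ a)| = |(-t) ^ a - (-s) ^ a| := by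
      congr 1; ring
    have e2 : |(-t) - (-s)| = |s - t| := by congr 1; ring
    rw [e1]
    rw [e2] at this
    have h2' : (0:ℝ) ≤ |s - t| ^ a := Real.rpow_nonneg (abs_nonneg _) _
    linarith
open Real Asymptotics Filter

lemma aux_hasDerivAt_abs_rpow {p : ℝ} (hp : 1 < p) (t : ℝ) :
    HasDerivAt (fun s : ℝ => |s| ^ p) (p * (Real.sign t * |t| ^ (p - 1))) t := by
  rcases lt_trichotomy t 0 with ht | ht | ht
  · -- t < 0
    have h1 : HasDerivAt (fun s : ℝ => s ^ p) (p * (-t) ^ (p - 1)) (-t) :=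
      Real.hasDerivAt_rpow_const (Or.inl (by linarith))
    have h2 : HasDerivAt (fun s : ℝ => (-s) ^ p) (p * (-t) ^ (p - 1) * (-1)) t :=
      HasDerivAt.comp t h1 (hasDerivAt_neg t)
    have heq : (fun s : ℝ => |s| ^ p) =ᶠ[nhds t] fun s => (-s) ^ p := by
      filter_upwards [eventually_lt_nhds ht] with s hs
      rw [abs_of_neg hs]
    have := h2.congr_of_eventuallyEq heq
    have e : p * (Real.sign t * |t| ^ (p - 1)) = p * (-t) ^ (p - 1) * (-1) := by
      rw [Real.sign_of_neg ht, abs_of_neg ht]; ring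
    rw [e]; exact this
  · -- t = 0
    subst ht
    rw [hasDerivAt_iff_isLittleO]
    simp only [Real.sign_zero, abs_zero, Real.zero_rpow (by linarith : p - 1 ≠ 0), mul_zero,
      zero_mul, smul_zero, sub_zero, Real.zero_rpow (by linarith : p ≠ 0)]
    rw [isLittleO_iff]
    intro c hc
    rw [Metric.eventually_nhds_iff]
    refine ⟨c ^ (p - 1)⁻¹, Real.rpow_pos_of_pos hc _, fun {s} hs => ?_⟩
    rw [Real.dist_eq, sub_zero] at hs
    have h1 : |s| ^ p = |s| ^ (p - 1) * |s| := by
      rw [← Real.rpow_add_one' (abs_nonneg s) (by linarith)]; ring_nf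
    have h2 : |s| ^ (p - 1) ≤ c := by
      calc |s| ^ (p - 1) ≤ (c ^ (p - 1)⁻¹) ^ (p - 1) :=
            Real.rpow_le_rpow (abs_nonneg s) hs.le (by linarith)
        _ = c := Real.rpow_inv_rpow hc.le (by linarith)
    have h3 : (0:ℝ) ≤ |s| ^ p := Real.rpow_nonneg (abs_nonneg s) _
    rw [Real.norm_eq_abs, Real.norm_eq_abs, abs_of_nonneg h3, h1]
    exact mul_le_mul_of_nonneg_right h2 (abs_nonneg s)
  · -- t > 0
    have h1 : HasDerivAt (fun s : ℝ => s ^ p) (p * t ^ (p - 1)) t :=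
      Real.hasDerivAt_rpow_const (Or.inl (by linarith))
    have heq : (fun s : ℝ => |s| ^ p) =ᶠ[nhds t] fun s => s ^ p := by
      filter_upwards [eventually_gt_nhds ht] with s hs
      rw [abs_of_pos hs]
    have := h1.congr_of_eventuallyEq heq
    have e : p * (Real.sign t * |t| ^ (p - 1)) = p * t ^ (p - 1) := by
      rw [Real.sign_of_pos ht, abs_of_pos ht]; ring
    rw [e]; exact this

lemma aux_final {p K q : ℝ} (hp : 0 < p) (hK : 0 ≤ K) (hq : q = p / (2 * (K + 1))) :
    K * q ≤ p / 2 := by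
  have hK1 : (0:ℝ) < K + 1 := by linarith
  calc K * q = (K * p) / (2 * (K + 1)) := by rw [hq]; ring
    _ ≤ p / 2 := by
        rw [div_le_div_iff₀ (by positivity) (by norm_num : (0:ℝ) < 2)]
        nlinarith

open Matrix MeasureTheory

theorem stmt_17 (ε : ℝ) (hε0 : 0 < ε) (hε1 : ε < 1)
    (u : EuclideanSpace ℝ (Fin 2) → ℝ)
    (hu : ∀ x : EuclideanSpace ℝ (Fin 2), u x = |x 0| ^ ((2 : ℝ) - ε)) :
    ConvexOn ℝ (Metric.ball (0 : EuclideanSpace ℝ (Fin 2)) 1) u ∧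
    (∀ᵐ x : EuclideanSpace ℝ (Fin 2), x ∈ Metric.ball (0 : EuclideanSpace ℝ (Fin 2)) 1 →
      Matrix.det (Matrix.of fun i j : Fin 2 =>
        fderiv ℝ (fun y => fderiv ℝ u y (EuclideanSpace.single j 1)) x
          (EuclideanSpace.single i 1)) = 0) ∧
    (∀ x ∈ Metric.ball (0 : EuclideanSpace ℝ (Fin 2)) 1, DifferentiableAt ℝ u x) ∧
    (∃ C : NNReal, HolderOnWith C (Real.toNNReal (1 - ε)) (fderiv ℝ u)
      (Metric.ball (0 : EuclideanSpace ℝ (Fin 2)) 1)) ∧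
    ¬ ∃ K : NNReal,
      LipschitzOnWith K (fderiv ℝ u) (Metric.ball (0 : EuclideanSpace ℝ (Fin 2)) 1) := by
  set p : ℝ := 2 - ε with hpdef
  have hp1 : 1 < p := by simp [hpdef]; linarith
  set a : ℝ := p - 1 with hadef
  have ha0 : 0 < a := by simp [hadef, hpdef]; linarith
  have ha1 : a ≤ 1 := by simp [hadef, hpdef]; linarith
  set pr : EuclideanSpace ℝ (Fin 2) →L[ℝ] ℝ := EuclideanSpace.proj (0 : Fin 2) with hprdef
  have hpr : ∀ z : EuclideanSpace ℝ (Fin 2), pr z = z 0 := fun z => rfl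
  set d : ℝ → ℝ := fun t => p * (Real.sign t * |t| ^ a) with hddef
  -- coordinate bound
  have habs : ∀ z : EuclideanSpace ℝ (Fin 2), |z 0| ≤ ‖z‖ := by
    intro z
    have h1 : (inner ℝ (EuclideanSpace.single (0 : Fin 2) (1:ℝ)) z : ℝ) = z 0 := by
      rw [EuclideanSpace.inner_single_left]; simp
    have h2 := abs_real_inner_le_norm (EuclideanSpace.single (0 : Fin 2) (1:ℝ)) z
    rw [h1, EuclideanSpace.norm_single] at h2
    simpa using h2
  have hprnorm : ‖pr‖ ≤ 1 := by
    refine ContinuousLinearMap.opNorm_le_bound _ zero_le_one fun z => ?_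
    rw [hpr, one_mul, Real.norm_eq_abs]
    exact habs z
  -- derivative
  have key : ∀ x : EuclideanSpace ℝ (Fin 2), HasFDerivAt u (d (x 0) • pr) x := by
    intro x
    have h1 : HasDerivAt (fun s : ℝ => |s| ^ p) (d (x 0)) (pr x) := by
      rw [hpr]
      exact aux_hasDerivAt_abs_rpow hp1 (x 0)
    have h2 := h1.comp_hasFDerivAt x pr.hasFDerivAt
    have e : u = (fun s : ℝ => |s| ^ p) ∘ pr := by
      funext y
      rw [hu y]
      simp [Function.comp, hpr]
    rw [e]; exact h2
  have hfd : ∀ x : EuclideanSpace ℝ (Fin 2), fderiv ℝ u x = d (x 0) • pr := fun x => (key x).fderiv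
  have hd0 : d 0 = 0 := by simp [hddef]
  refine ⟨?_, ?_, ?_, ?_, ?_⟩
  · -- convexity
    refine ⟨convex_ball _ _, fun x _ y _ b c hb hc hbc => ?_⟩
    rw [hu, hu, hu]
    have hco : (b • x + c • y) 0 = b * x 0 + c * y 0 := by
      simp [PiLp.add_apply, PiLp.smul_apply, smul_eq_mul]
    rw [hco]
    have step1 : |b * x 0 + c * y 0| ^ p ≤ (b * |x 0| + c * |y 0|) ^ p := by
      refine Real.rpow_le_rpow (abs_nonneg _) ?_ (by linarith)
      calc |b * x 0 + c * y 0| ≤ |b * x 0| + |c * y 0| := abs_add_le _ _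
        _ = b * |x 0| + c * |y 0| := by rw [abs_mul, abs_mul, abs_of_nonneg hb, abs_of_nonneg hc]
    have step2 := (convexOn_rpow (le_of_lt hp1)).2 (Set.mem_Ici.2 (abs_nonneg (x 0)))
      (Set.mem_Ici.2 (abs_nonneg (y 0))) hb hc hbc
    simp only [smul_eq_mul] at step2 ⊢
    linarith
  · -- det = 0 (in fact everywhere)
    refine Filter.Eventually.of_forall fun x _ => ?_
    have hcol : (fun y : EuclideanSpace ℝ (Fin 2) => fderiv ℝ u y (EuclideanSpace.single (1 : Fin 2) 1)) = fun _ => (0:ℝ) := by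
      funext y
      rw [hfd y]
      simp only [ContinuousLinearMap.smul_apply, smul_eq_mul]
      rw [hpr]
      rw [EuclideanSpace.single_apply]
      norm_num
    have hM : ∀ i : Fin 2, fderiv ℝ (fun y : EuclideanSpace ℝ (Fin 2) => fderiv ℝ u y (EuclideanSpace.single (1 : Fin 2) 1)) x
        (EuclideanSpace.single i 1) = 0 := by
      intro i
      rw [hcol, fderiv_fun_const]
      simp
    rw [Matrix.det_fin_two]
    simp only [Matrix.of_apply]
    rw [hM 0, hM 1]
    ring
  · exact fun x _ => (key x).differentiableAt
  · -- Hölder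
    refine ⟨(2 * p).toNNReal, fun x _ y _ => ?_⟩
    have hdd : dist (fderiv ℝ u x) (fderiv ℝ u y) ≤ 2 * p * dist x y ^ a := by
      rw [dist_eq_norm, hfd x, hfd y, ← sub_smul]
      have hb : ‖(d (x 0) - d (y 0)) • pr‖ ≤ |d (x 0) - d (y 0)| := by
        refine ContinuousLinearMap.opNorm_le_bound _ (abs_nonneg _) fun z => ?_
        simp only [ContinuousLinearMap.smul_apply, smul_eq_mul, Real.norm_eq_abs, abs_mul, hpr]
        exact mul_le_mul_of_nonneg_left (habs z) (abs_nonneg _)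
      calc ‖(d (x 0) - d (y 0)) • pr‖ ≤ |d (x 0) - d (y 0)| := hb
        _ = p * |Real.sign (x 0) * |x 0| ^ a - Real.sign (y 0) * |y 0| ^ a| := by
            rw [hddef]
            rw [← mul_sub, abs_mul, abs_of_nonneg (by linarith : (0:ℝ) ≤ p)]
        _ ≤ p * (2 * |x 0 - y 0| ^ a) := by
            exact mul_le_mul_of_nonneg_left (aux_sp_holder ha0 ha1 (x 0) (y 0)) (by linarith)
        _ ≤ p * (2 * dist x y ^ a) := by
            have h1 : |x 0 - y 0| ≤ dist x y := by
              rw [dist_eq_norm]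
              have : (x - y) 0 = x 0 - y 0 := rfl
              rw [← this]
              exact habs (x - y)
            have := Real.rpow_le_rpow (abs_nonneg _) h1 ha0.le
            nlinarith [Real.rpow_nonneg (abs_nonneg (x 0 - y 0)) a]
        _ = 2 * p * dist x y ^ a := by ring
    have hae : ((Real.toNNReal (1 - ε) : NNReal) : ℝ) = a := by
      rw [Real.coe_toNNReal _ (by linarith)]
      simp [hadef, hpdef]; ring
    rw [edist_dist, edist_dist, hae]
    calc ENNReal.ofReal (dist (fderiv ℝ u x) (fderiv ℝ u y))
        ≤ ENNReal.ofReal (2 * p * dist x y ^ a) := ENNReal.ofReal_le_ofReal hdd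
      _ = ENNReal.ofReal (2 * p) * ENNReal.ofReal (dist x y ^ a) := by
          rw [ENNReal.ofReal_mul (by linarith)]
      _ = ((2 * p).toNNReal : ENNReal) * ENNReal.ofReal (dist x y) ^ a := by
          rw [← ENNReal.ofReal_rpow_of_nonneg dist_nonneg ha0.le]
          rfl
  · -- not Lipschitz
    rintro ⟨K, hK⟩
    set q : ℝ := (p / (2 * ((K:ℝ) + 1))) with hqdef
    have hq0 : 0 < q := by
      apply div_pos (by linarith)
      positivity
    set t : ℝ := min (1/2) (q ^ (1/ε)) with htdef
    have ht0 : 0 < t := lt_min (by norm_num) (Real.rpow_pos_of_pos hq0 _)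
    have ht1 : t < 1 := lt_of_le_of_lt (min_le_left _ _) (by norm_num)
    set x : EuclideanSpace ℝ (Fin 2) := EuclideanSpace.single (0 : Fin 2) t with hxdef
    have hxnorm : ‖x‖ = t := by
      rw [hxdef, EuclideanSpace.norm_single, Real.norm_eq_abs, abs_of_pos ht0]
    have hxball : x ∈ Metric.ball (0 : EuclideanSpace ℝ (Fin 2)) 1 := by
      rw [Metric.mem_ball, dist_zero_right, hxnorm]; exact ht1
    have h0ball : (0 : EuclideanSpace ℝ (Fin 2)) ∈ Metric.ball (0 : EuclideanSpace ℝ (Fin 2)) 1 := by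
      rw [Metric.mem_ball, dist_self]; norm_num
    have hdist := hK.dist_le_mul x hxball 0 h0ball
    have hx0 : x 0 = t := by
      rw [hxdef, EuclideanSpace.single_apply]; norm_num
    have h00 : (0 : EuclideanSpace ℝ (Fin 2)) 0 = 0 := rfl
    have hdt : d t = p * t ^ a := by
      rw [hddef]
      simp only []
      rw [Real.sign_of_pos ht0, abs_of_pos ht0, one_mul]
    -- lower bound on operator norm distance
    have hlow : p * t ^ a ≤ dist (fderiv ℝ u x) (fderiv ℝ u 0) := by
      rw [dist_eq_norm, hfd x, hfd 0, hx0, h00, hd0, zero_smul, sub_zero]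
      have happ : (d t • pr) (EuclideanSpace.single (0 : Fin 2) (1:ℝ)) = d t := by
        simp only [ContinuousLinearMap.smul_apply, smul_eq_mul]
        rw [hpr, EuclideanSpace.single_apply]
        norm_num
      have hthis := (d t • pr).le_opNorm (EuclideanSpace.single (0 : Fin 2) (1:ℝ))
      rw [happ, EuclideanSpace.norm_single, norm_one, mul_one, Real.norm_eq_abs] at hthis
      calc p * t ^ a = |d t| := by
            rw [hdt, abs_of_nonneg]; positivity
        _ ≤ ‖d t • pr‖ := hthis
    have hdist0 : dist x (0 : EuclideanSpace ℝ (Fin 2)) = t := by rw [dist_zero_right, hxnorm]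
    rw [hdist0] at hdist
    -- p * t ^ a ≤ K * t
    have h1 : p * t ^ a ≤ (K:ℝ) * t := le_trans hlow hdist
    -- divide: p ≤ K * t ^ ε
    have hta : (0:ℝ) < t ^ a := Real.rpow_pos_of_pos ht0 _
    have hsplit : t ^ a * t ^ ε = t := by
      rw [← Real.rpow_add ht0]
      have hae1 : a + ε = 1 := by rw [hadef, hpdef]; ring
      rw [hae1, Real.rpow_one]
    have h2 : p ≤ (K:ℝ) * t ^ ε := by
      have e : ((K:ℝ) * t ^ ε) * t ^ a = (K:ℝ) * t := by
        rw [mul_assoc, mul_comm (t ^ ε), hsplit]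
      have h1' : p * t ^ a ≤ ((K:ℝ) * t ^ ε) * t ^ a := by rw [e]; exact h1
      exact le_of_mul_le_mul_right h1' hta
    -- t ^ ε ≤ q
    have h3 : t ^ ε ≤ q := by
      have : t ≤ q ^ (1/ε) := min_le_right _ _
      calc t ^ ε ≤ (q ^ (1/ε)) ^ ε := Real.rpow_le_rpow ht0.le this hε0.le
        _ = q := by
            rw [one_div, Real.rpow_inv_rpow hq0.le hε0.ne']
    have h4 : (K:ℝ) * q ≤ p / 2 :=
      aux_final (by linarith) K.coe_nonneg hqdef
    have h5 : (K:ℝ) * t ^ ε ≤ (K:ℝ) * q :=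
      mul_le_mul_of_nonneg_left h3 K.coe_nonneg
    linarith
end
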